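/- Let D=(V,E) be a finite connected graph, let H: V → 2ℤ+1 be a positive height function (H(v) ≥ 1 for all v, |H(v)-H(w)| ≤ 2 on edges), and let E_fix(H) be the set of edges ⟨v,w⟩ with max{H(v),H(w)} ≥ 3. Then for any two functions h, h': V → ℤ with |h| = |h'| = H, if h and h' agree at one endpoint of an edge e ∈ E_fix(H) then they agree at both endpoints of e. Consequently, the sign of any h with |h| = H is constant on each connected component of the graph (V, E_fix(H)), and the map h ↦ (sign of h on each E_fix-component) is a bijection between height functions h with |h| = H and sign assignments σ: V/∼ → {±1}, where ∼ is the equivalence of being E_fix(H)-connected. -/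

import Mathlib

/-- A height function: odd-valued and changing by at most 2 along edges. -/
def IsHeight {V : Type*} (G : SimpleGraph V) (h : V → ℤ) : Prop :=
  (∀ v, Odd (h v)) ∧ ∀ v w, G.Adj v w → |h v - h w| ≤ 2

/-- The graph of fixed-sign edges of a positive height function `H`. -/
def fixGraph {V : Type*} (G : SimpleGraph V) (H : V → ℤ) : SimpleGraph V where
  Adj v w := G.Adj v w ∧ 3 ≤ max (H v) (H w)
  symm := by
    constructor
    intro v w hvw
    exact ⟨hvw.1.symm, by rw [max_comm]; exact hvw.2⟩
  loopless := by
    constructor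
    intro v hv
    exact G.irrefl hv.1

private lemma eq_of_sign' {H x y : ℤ} (hH : 1 ≤ H) (hx : |x| = H) (hy : |y| = H)
    (hs : 0 < x ↔ 0 < y) : x = y := by
  rcases (abs_eq (by linarith)).1 hx with h | h <;>
    rcases (abs_eq (by linarith)).1 hy with h' | h'
  · omega
  · exact absurd (hs.1 (by omega)) (by omega)
  · exact absurd (hs.2 (by omega)) (by omega)
  · omega

private lemma sign_adj' {V : Type*} {G : SimpleGraph V} {H : V → ℤ}
    (Hpos : ∀ v, 1 ≤ H v) {h : V → ℤ} (hh : IsHeight G h)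
    (habs : ∀ v, |h v| = H v) {v w : V} (hadj : (fixGraph G H).Adj v w) :
    (0 < h v ↔ 0 < h w) := by
  obtain ⟨hG, hmax⟩ := hadj
  have h2 := hh.2 v w hG
  rw [abs_le] at h2
  have hpv := Hpos v
  have hpw := Hpos w
  have hv := (abs_eq (by linarith)).1 (habs v)
  have hw := (abs_eq (by linarith)).1 (habs w)
  rcases le_max_iff.1 hmax with h3 | h3 <;>
    rcases hv with hv | hv <;> rcases hw with hw | hw <;>
    constructor <;> intro hp <;> omega

private lemma sign_reach' {V : Type*} {G : SimpleGraph V} {H : V → ℤ}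
    (Hpos : ∀ v, 1 ≤ H v) {h : V → ℤ} (hh : IsHeight G h)
    (habs : ∀ v, |h v| = H v) {v w : V} (hr : (fixGraph G H).Reachable v w) :
    (0 < h v ↔ 0 < h w) := by
  obtain ⟨p⟩ := hr
  induction p with
  | nil => exact Iff.rfl
  | cons hadj p ih => exact (sign_adj' Hpos hh habs hadj).trans ih

theorem stmt_2 {V : Type*} [Fintype V] (G : SimpleGraph V) (hconn : G.Connected)
    (H : V → ℤ) (Hheight : IsHeight G H) (Hpos : ∀ v, 1 ≤ H v) :
    (∀ h h' : V → ℤ, IsHeight G h → IsHeight G h' →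
        (∀ v, |h v| = H v) → (∀ v, |h' v| = H v) →
        ∀ v w, (fixGraph G H).Adj v w → h v = h' v → h w = h' w) ∧
    (∀ h : V → ℤ, IsHeight G h → (∀ v, |h v| = H v) →
        ∀ v w : V, (fixGraph G H).Reachable v w → (0 < h v ↔ 0 < h w)) ∧
    Function.Bijective
      (fun h : {h : V → ℤ // IsHeight G h ∧ ∀ v, |h v| = H v} =>
        fun comp : (fixGraph G H).ConnectedComponent =>
          (if 0 < h.1 (Quot.out comp) then 1 else -1 : ℤˣ)) := by
  refine ⟨?_, ?_, ?_, ?_⟩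
  · intro h h' hh hh' habs habs' v w hadj heq
    have hs : (0 < h v ↔ 0 < h' v) := by rw [heq]
    have s1 := sign_adj' Hpos hh habs hadj
    have s2 := sign_adj' Hpos hh' habs' hadj
    exact eq_of_sign' (Hpos w) (habs w) (habs' w)
      (s1.symm.trans (hs.trans s2))
  · intro h hh habs v w hr
    exact sign_reach' Hpos hh habs hr
  · -- injective
    intro h₁ h₂ heq
    apply Subtype.ext
    funext v
    have hreach : (fixGraph G H).Reachable v
        (Quot.out ((fixGraph G H).connectedComponentMk v)) := by
      rw [← SimpleGraph.ConnectedComponent.eq]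
      exact (Quot.out_eq _).symm
    have hc := congrFun heq ((fixGraph G H).connectedComponentMk v)
    simp only at hc
    have hiff : (0 < h₁.1 (Quot.out ((fixGraph G H).connectedComponentMk v)) ↔
        0 < h₂.1 (Quot.out ((fixGraph G H).connectedComponentMk v))) := by
      by_cases h1 : 0 < h₁.1 (Quot.out ((fixGraph G H).connectedComponentMk v)) <;>
        by_cases h2 : 0 < h₂.1 (Quot.out ((fixGraph G H).connectedComponentMk v)) <;>
        simp [h1, h2] at hc ⊢
    have s1 := sign_reach' Hpos h₁.2.1 h₁.2.2 hreach
    have s2 := sign_reach' Hpos h₂.2.1 h₂.2.2 hreach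
    exact eq_of_sign' (Hpos v) (h₁.2.2 v) (h₂.2.2 v)
      (s1.trans (hiff.trans s2.symm))
  · -- surjective
    intro σ
    set h : V → ℤ := fun v => (σ ((fixGraph G H).connectedComponentMk v) : ℤ) * H v with hdef
    have habs : ∀ v, |h v| = H v := by
      intro v
      rcases Int.units_eq_one_or (σ ((fixGraph G H).connectedComponentMk v)) with hu | hu <;>
        simp [hdef, hu, abs_of_nonneg (by linarith [Hpos v] : (0:ℤ) ≤ H v)]
    have hheight : IsHeight G h := by
      constructor
      · intro v
        rcases Int.units_eq_one_or (σ ((fixGraph G H).connectedComponentMk v)) with hu | hu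
        · simpa [hdef, hu] using Hheight.1 v
        · simpa [hdef, hu] using (Hheight.1 v).neg
      · intro v w hvw
        by_cases hcomp : (fixGraph G H).connectedComponentMk v =
            (fixGraph G H).connectedComponentMk w
        · have hHd := Hheight.2 v w hvw
          rw [abs_le] at hHd
          simp only [hdef]
          rw [hcomp]
          rcases Int.units_eq_one_or (σ ((fixGraph G H).connectedComponentMk w)) with hu | hu <;>
            rw [hu, abs_le] <;>
            simp only [Units.val_one, Units.val_neg, one_mul, neg_mul] <;>
            constructor <;> linarith [hHd.1, hHd.2]
        · have hnadj : ¬ (fixGraph G H).Adj v w := fun ha =>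
            hcomp (SimpleGraph.ConnectedComponent.sound ha.reachable)
          have hmax : ¬ (3 ≤ max (H v) (H w)) := fun hm => hnadj ⟨hvw, hm⟩
          obtain ⟨kv, hkv⟩ := Hheight.1 v
          obtain ⟨kw, hkw⟩ := Hheight.1 w
          have h1 : H v = 1 := by
            have := Hpos v; have := Hpos w
            have : max (H v) (H w) < 3 := by omega
            rw [max_lt_iff] at this; omega
          have h2 : H w = 1 := by
            have := Hpos v; have := Hpos w
            have : max (H v) (H w) < 3 := by omega
            rw [max_lt_iff] at this; omega
          have hav := habs v
          have haw := habs w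
          rw [h1] at hav; rw [h2] at haw
          rw [abs_le]
          rcases (abs_eq (by norm_num : (0:ℤ) ≤ 1)).1 hav with e1 | e1 <;>
            rcases (abs_eq (by norm_num : (0:ℤ) ≤ 1)).1 haw with e2 | e2 <;> omega
    refine ⟨⟨h, hheight, habs⟩, ?_⟩
    funext comp
    simp only
    have hout : (fixGraph G H).connectedComponentMk (Quot.out comp) = comp := Quot.out_eq comp
    have hval : h (Quot.out comp) = (σ comp : ℤ) * H (Quot.out comp) := by
      simp only [hdef]; rw [hout]
    have hp := Hpos (Quot.out comp)
    rcases Int.units_eq_one_or (σ comp) with hu | hu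
    · have hpos' : 0 < h (Quot.out comp) := by
        rw [hval, hu]; simp only [Units.val_one, one_mul]; omega
      rw [if_pos hpos', hu]
    · have hneg' : ¬ 0 < h (Quot.out comp) := by
        rw [hval, hu]; simp only [Units.val_neg, Units.val_one, neg_mul, one_mul]; omega
      rw [if_neg hneg', hu]
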